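/- Let L be a finite meet-semilattice, X = {x₁,…,x_n} ⊆ L, and X̄ = {x₁,…,x_n,x_{n+1},…,x_{n+m}} the smallest factor-closed subset of L containing X. Let R be a commutative ring, k ≥ 2, 𝓕 : (S_n)^{k-2} → R any map; for each x ∈ X fix z_x ∈ X̄ with z_x ≤ x; let F : X̄ → R be a single function and set f(z) = ∑_{y ∈ X̄} μ(y,z) F(y), with μ the Möbius function of X̄ and ζ(u,v) = 1 if u ≤ v, 0 otherwise. Then Det_𝓕( (F(z_{x_{i₁}} ∧ x_{i₂} ∧ ⋯ ∧ x_{i_k}))_{1≤i₁,…,i_k≤n} ) = ∑_{1 ≤ k₁ < ⋯ < k_n ≤ n+m} ( ∏_{i=1}^n f(x_{k_i}) ) · Det_𝓕( (ζ(x_{k_{i₂}}, z_{x_{i₁}} ∧ x_{i₃} ∧ ⋯ ∧ x_{i_k}))_{1≤i₁,…,i_k≤n} ) · det( ζ(x_{k_i}, x_j) )_{1≤i,j≤n}. -/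

import Mathlib

open Equiv Equiv.Perm Finset Function Matrix

section Helpers

lemma le_foldr_inf {L : Type*} [SemilatticeInf L] (l : List L) (a c : L) :
    c ≤ l.foldr (· ⊓ ·) a ↔ c ≤ a ∧ ∀ b ∈ l, c ≤ b := by
  induction l with
  | nil => simp
  | cons h t ih =>
    simp only [List.foldr_cons, le_inf_iff, ih, List.mem_cons]
    constructor
    · rintro ⟨h1, h2, h3⟩; exact ⟨h2, fun b hb => hb.elim (fun e => e ▸ h1) (h3 b)⟩
    · rintro ⟨h1, h2⟩; exact ⟨h2 h (Or.inl rfl), h1, fun b hb => h2 b (Or.inr hb)⟩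

lemma sum_Icc_mu {L : Type*} {R : Type*} [CommRing R] [PartialOrder L]
    [LocallyFiniteOrder L] [DecidableEq L] [DecidableRel ((· ≤ ·) : L → L → Prop)]
    (a b : L) :
    ∑ y ∈ Finset.Icc a b, IncidenceAlgebra.mu R a y = if a = b then 1 else 0 := by
  have h := congrArg (fun g : IncidenceAlgebra R L => g a b)
    (IncidenceAlgebra.mu_mul_zeta (𝕜 := R) (α := L))
  simp only [IncidenceAlgebra.mul_apply, IncidenceAlgebra.one_apply,
    IncidenceAlgebra.zeta_apply] at h
  rw [← h]
  refine Finset.sum_congr rfl fun y hy => ?_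
  rw [Finset.mem_Icc] at hy
  rw [if_pos hy.2, mul_one]

end Helpers



/-- The `𝓕`-determinant of a `k`-dimensional hypermatrix (`k = p + 2`), where the first two
indices are explicit and the remaining `p = k - 2` indices are gathered in a tuple:
`Det_𝓕(M) = ∑_{(σ₂,σ₃,…,σ_k)} sign(σ₂) ⋅ 𝓕(σ₃,…,σ_k) ⋅ ∏_i M_{i,σ₂(i),…,σ_k(i)}`. -/
def DetF {R : Type*} [CommRing R] {n p : ℕ}
    (𝓕 : (Fin p → Equiv.Perm (Fin n)) → R)
    (M : Fin n → Fin n → (Fin p → Fin n) → R) : R :=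
  ∑ σ₂ : Equiv.Perm (Fin n), ∑ τ : Fin p → Equiv.Perm (Fin n),
    ((Equiv.Perm.sign σ₂ : ℤ) : R) * 𝓕 τ * ∏ i : Fin n, M i (σ₂ i) (fun j => τ j i)

/-- The meet `a ⊓ v 0 ⊓ v 1 ⊓ ⋯` of an element `a` with a tuple `v` of elements of a
meet-semilattice. -/
def meetAll {L : Type*} [SemilatticeInf L] {p : ℕ} (a : L) (v : Fin p → L) : L :=
  (List.ofFn v).foldr (· ⊓ ·) a

lemma le_meetAll {L : Type*} [SemilatticeInf L] {p : ℕ} (a c : L) (v : Fin p → L) :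
    c ≤ meetAll a v ↔ c ≤ a ∧ ∀ l, c ≤ v l := by
  rw [meetAll, le_foldr_inf]
  simp only [List.mem_ofFn, Set.mem_range, forall_exists_index]
  constructor
  · rintro ⟨h1, h2⟩; exact ⟨h1, fun l => h2 _ l rfl⟩
  · rintro ⟨h1, h2⟩; exact ⟨h1, fun b l hb => hb ▸ h2 l⟩

lemma meetAll_le {L : Type*} [SemilatticeInf L] {p : ℕ} (a : L) (v : Fin p → L) :
    meetAll a v ≤ a := ((le_meetAll a _ v).1 le_rfl).1

lemma detF_eq {R : Type*} [CommRing R] {n p : ℕ}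
    (𝓕 : (Fin p → Equiv.Perm (Fin n)) → R)
    (M : Fin n → Fin n → (Fin p → Fin n) → R) :
    DetF 𝓕 M = ∑ τ : Fin p → Equiv.Perm (Fin n),
      𝓕 τ * Matrix.det (Matrix.of fun a b => M b a (fun j => τ j b)) := by
  rw [DetF, Finset.sum_comm]
  refine Finset.sum_congr rfl fun τ _ => ?_
  rw [Matrix.det_apply', Finset.mul_sum]
  refine Finset.sum_congr rfl fun σ _ => ?_
  simp only [Matrix.of_apply]
  ring

lemma my_det_mul_aux {R : Type*} [CommRing R] {n N : ℕ}
    {A : Matrix (Fin n) (Fin N) R} {B : Matrix (Fin N) (Fin n) R}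
    {φ : Fin n → Fin N} (H : ¬ Function.Injective φ) :
    (∑ σ : Equiv.Perm (Fin n),
      ((Equiv.Perm.sign σ : ℤ) : R) * ∏ i, A (σ i) (φ i) * B (φ i) i) = 0 := by
  obtain ⟨i, j, hpij, hij⟩ : ∃ i j, φ i = φ j ∧ i ≠ j := by
    rw [Function.Injective] at H
    push_neg at H
    obtain ⟨i, j, h1, h2⟩ := H
    exact ⟨i, j, h1, h2⟩
  exact
    sum_involution (fun σ _ => σ * Equiv.swap i j)
      (fun σ _ => by
        have : (∏ x, A (σ x) (φ x))
            = ∏ x, A ((σ * Equiv.swap i j) x) (φ x) :=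
          Fintype.prod_equiv (swap i j) _ _ (by simp [apply_swap_eq_self hpij])
        simp [this, sign_swap hij, -sign_swap', prod_mul_distrib])
      (fun σ _ _ => (not_congr mul_swap_eq_iff).mpr hij) (fun _ _ => mem_univ _) fun σ _ =>
      mul_swap_involutive i j σ

theorem cauchyBinet {R : Type*} [CommRing R] {n N : ℕ}
    (A : Matrix (Fin n) (Fin N) R) (B : Matrix (Fin N) (Fin n) R) :
    (A * B).det = ∑ κ ∈ Finset.univ.filter
        (fun κ : Fin n → Fin N => ∀ i j : Fin n, i < j → κ i < κ j),
      (A.submatrix id κ).det * (B.submatrix κ id).det := by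
  have key : ∀ κ : Fin n → Fin N,
      (∑ e : Perm (Fin n), ∑ σ : Perm (Fin n),
        ((Equiv.Perm.sign σ : ℤ) : R) * ∏ i, A (σ i) (κ (e i)) * B (κ (e i)) i)
      = (A.submatrix id κ).det * (B.submatrix κ id).det := by
    intro κ
    have inner : ∀ e : Perm (Fin n),
        (∑ σ : Perm (Fin n),
          ((Equiv.Perm.sign σ : ℤ) : R) * ∏ i, A (σ i) (κ (e i)) * B (κ (e i)) i)
        = (((Equiv.Perm.sign e : ℤ) : R) * ∏ i, B (κ (e i)) i) * (A.submatrix id κ).det := by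
      intro e
      have h1 : (∑ σ : Perm (Fin n),
            ((Equiv.Perm.sign σ : ℤ) : R) * ∏ i, A (σ i) (κ (e i)))
          = (A.submatrix id (κ ∘ e)).det := by
        rw [Matrix.det_apply']
        rfl
      have h2 : (A.submatrix id (κ ∘ e)).det
          = ((Equiv.Perm.sign e : ℤ) : R) * (A.submatrix id κ).det := by
        have : A.submatrix id (κ ∘ e) = (A.submatrix id κ).submatrix id e := rfl
        rw [this, Matrix.det_permute']
      calc (∑ σ : Perm (Fin n),
            ((Equiv.Perm.sign σ : ℤ) : R) * ∏ i, A (σ i) (κ (e i)) * B (κ (e i)) i)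
          = (∏ i, B (κ (e i)) i) * ∑ σ : Perm (Fin n),
            ((Equiv.Perm.sign σ : ℤ) : R) * ∏ i, A (σ i) (κ (e i)) := by
            rw [Finset.mul_sum]
            refine Finset.sum_congr rfl fun σ _ => ?_
            rw [Finset.prod_mul_distrib]; ring
        _ = (((Equiv.Perm.sign e : ℤ) : R) * ∏ i, B (κ (e i)) i) * (A.submatrix id κ).det := by
            rw [h1, h2]; ring
    rw [Finset.sum_congr rfl fun e _ => inner e]
    rw [← Finset.sum_mul, mul_comm]
    congr 1
    rw [Matrix.det_apply']
    rfl
  have step1 : (A * B).det = ∑ φ : Fin n → Fin N, ∑ σ : Perm (Fin n),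
      ((Equiv.Perm.sign σ : ℤ) : R) * ∏ i, A (σ i) (φ i) * B (φ i) i := by
    simp only [Matrix.det_apply', Matrix.mul_apply, Finset.prod_univ_sum, Finset.mul_sum,
      Fintype.piFinset_univ]
    rw [Finset.sum_comm]
  have step2 : (∑ φ : Fin n → Fin N, ∑ σ : Perm (Fin n),
      ((Equiv.Perm.sign σ : ℤ) : R) * ∏ i, A (σ i) (φ i) * B (φ i) i)
      = ∑ φ ∈ Finset.univ.filter (fun φ : Fin n → Fin N => Function.Injective φ),
        ∑ σ : Perm (Fin n),
        ((Equiv.Perm.sign σ : ℤ) : R) * ∏ i, A (σ i) (φ i) * B (φ i) i := by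
    refine (Finset.sum_subset (Finset.filter_subset _ _) fun φ _ hφ => ?_).symm
    refine my_det_mul_aux ?_
    simpa only [Finset.mem_filter, Finset.mem_univ, true_and] using hφ
  have step3 : (∑ φ ∈ Finset.univ.filter (fun φ : Fin n → Fin N => Function.Injective φ),
        ∑ σ : Perm (Fin n),
        ((Equiv.Perm.sign σ : ℤ) : R) * ∏ i, A (σ i) (φ i) * B (φ i) i)
      = ∑ q ∈ (Finset.univ.filter
          (fun κ : Fin n → Fin N => ∀ i j : Fin n, i < j → κ i < κ j)) ×ˢ
          (Finset.univ : Finset (Perm (Fin n))),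
        ∑ σ : Perm (Fin n),
        ((Equiv.Perm.sign σ : ℤ) : R) * ∏ i, A (σ i) (q.1 (q.2 i)) * B (q.1 (q.2 i)) i := by
    refine (Finset.sum_nbij' (i := fun φ => (φ ∘ Tuple.sort φ, (Tuple.sort φ)⁻¹))
      (j := fun q => q.1 ∘ q.2) ?_ ?_ ?_ ?_ ?_).symm.symm
    · intro φ hφ
      rw [Finset.mem_filter] at hφ
      have hinj : Function.Injective φ := hφ.2
      have hsm : StrictMono (φ ∘ Tuple.sort φ) :=
        (Tuple.monotone_sort φ).strictMono_of_injective
          (hinj.comp (Tuple.sort φ).injective)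
      refine Finset.mem_product.2 ⟨Finset.mem_filter.2 ⟨Finset.mem_univ _, ?_⟩,
        Finset.mem_univ _⟩
      intro i j hij
      exact hsm hij
    · rintro ⟨κ, e⟩ hq
      rw [Finset.mem_product, Finset.mem_filter] at hq
      have hκ : StrictMono κ := fun a b hab => hq.1.2 a b hab
      exact Finset.mem_filter.2 ⟨Finset.mem_univ _, hκ.injective.comp e.injective⟩
    · intro φ _
      funext i
      simp [Function.comp]
    · rintro ⟨κ, e⟩ hq
      rw [Finset.mem_product, Finset.mem_filter] at hq
      have hκ : StrictMono κ := fun a b hab => hq.1.2 a b hab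
      set φ : Fin n → Fin N := κ ∘ e with hφdef
      set s : Perm (Fin n) := Tuple.sort φ with hs
      have hinj : Function.Injective φ := hκ.injective.comp e.injective
      have hsm : StrictMono (φ ∘ s) :=
        (Tuple.monotone_sort φ).strictMono_of_injective (hinj.comp s.injective)
      have hrange : Set.range (φ ∘ ⇑s) = Set.range κ := by
        rw [s.surjective.range_comp]
        rw [hφdef, e.surjective.range_comp]
      haveI : WellFoundedLT (Fin n) := inferInstance
      have h1 : φ ∘ ⇑s = κ :=
        (StrictMono.range_inj (β := Fin n) (γ := Fin N) hsm hκ).1 hrange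
      have h2 : s⁻¹ = e := by
        have he : ∀ i, e (s i) = i := fun i => hκ.injective (congrFun h1 i)
        ext i
        have := he (s⁻¹ i)
        simp only [Equiv.Perm.coe_inv, Equiv.apply_symm_apply] at this
        simp [this]
      simp only [Prod.mk.injEq]
      exact ⟨h1, h2⟩
    · intro φ hφ
      refine Finset.sum_congr rfl fun σ _ => ?_
      simp [Function.comp]
  rw [step1, step2, step3, Finset.sum_product]
  exact Finset.sum_congr rfl fun κ _ => key κ

/-- same setting as Statement 10 but with a single function `F : X̄ → R` and
`f v = ∑_{y ∈ X̄} μ(y,v) F y`.  Then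
`Det_𝓕((F(z_{x_{i₁}} ∧ x_{i₂} ∧ ⋯ ∧ x_{i_k}))) = ∑_{k₁<⋯<k_n} (∏ᵢ f(x_{k_i})) ⋅
Det_𝓕((ζ(x_{k_{i₂}}, z_{x_{i₁}} ∧ x_{i₃} ∧ ⋯ ∧ x_{i_k}))) ⋅ det(ζ(x_{k_i},x_j))`. -/
theorem li_expansion_detF_single_F {L R : Type*} [Fintype L] [DecidableEq L]
    [SemilatticeInf L] [LocallyFiniteOrder L]
    [DecidableRel ((· ≤ ·) : L → L → Prop)] [CommRing R]
    {n m p : ℕ} (x : Fin (n + m) → L) (hinj : Function.Injective x)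
    (hfc : ∀ (j : Fin (n + m)) (w : L), w ≤ x j → ∃ j' : Fin (n + m), x j' = w)
    (hmin : ∀ j : Fin (n + m), ∃ i : Fin n, x j ≤ x (Fin.castAdd m i))
    (z : Fin n → L) (hzmem : ∀ i, ∃ j : Fin (n + m), z i = x j)
    (hz : ∀ i : Fin n, z i ≤ x (Fin.castAdd m i))
    (𝓕 : (Fin p → Equiv.Perm (Fin n)) → R)
    (F : L → R)
    (f : L → R)
    (hf : ∀ v, f v = ∑ j : Fin (n + m), IncidenceAlgebra.mu R (x j) v * F (x j)) :
    DetF 𝓕 (fun i₁ i₂ t =>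
        F (meetAll (z i₁ ⊓ x (Fin.castAdd m i₂)) (fun l => x (Fin.castAdd m (t l))))) =
      ∑ κ ∈ Finset.univ.filter
          (fun κ : Fin n → Fin (n + m) => ∀ i j : Fin n, i < j → κ i < κ j),
        (∏ i : Fin n, f (x (κ i))) *
          DetF 𝓕 (fun i₁ i₂ t =>
            if x (κ i₂) ≤ meetAll (z i₁) (fun l => x (Fin.castAdd m (t l))) then (1 : R)
            else 0) *
          Matrix.det (Matrix.of fun i j : Fin n =>
            if x (κ i) ≤ x (Fin.castAdd m j) then (1 : R) else 0) := by
  classical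
  -- Step 1: Möbius inversion: F at a point of the range of x
  have hFw : ∀ j₀ : Fin (n + m),
      F (x j₀) = ∑ j : Fin (n + m), if x j ≤ x j₀ then f (x j) else 0 := by
    intro j₀
    have inner : ∀ j' : Fin (n + m),
        (∑ j : Fin (n + m), if x j ≤ x j₀ then IncidenceAlgebra.mu R (x j') (x j) else 0)
        = if x j' = x j₀ then 1 else 0 := by
      intro j'
      rw [← sum_Icc_mu (R := R) (x j') (x j₀)]
      have hterm : ∀ j : Fin (n + m),
          (if x j ≤ x j₀ then IncidenceAlgebra.mu R (x j') (x j) else 0)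
          = if x j' ≤ x j ∧ x j ≤ x j₀ then IncidenceAlgebra.mu R (x j') (x j) else 0 := by
        intro j
        by_cases h1 : x j ≤ x j₀
        · by_cases h2 : x j' ≤ x j
          · simp [h1, h2]
          · simp [h1, h2, IncidenceAlgebra.apply_eq_zero_of_not_le h2]
        · simp [h1]
      rw [Finset.sum_congr rfl fun j _ => hterm j, ← Finset.sum_filter]
      refine Finset.sum_bij (fun j _ => x j) ?_ ?_ ?_ ?_
      · intro j hj
        rw [Finset.mem_filter] at hj
        exact Finset.mem_Icc.2 hj.2
      · intro a _ b _ hab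
        exact hinj hab
      · intro y hy
        rw [Finset.mem_Icc] at hy
        obtain ⟨j, hj⟩ := hfc j₀ y hy.2
        exact ⟨j, Finset.mem_filter.2 ⟨Finset.mem_univ _, by rw [hj]; exact hy⟩, hj⟩
      · intro j _
        rfl
    calc F (x j₀)
        = ∑ j' : Fin (n + m), (if x j' = x j₀ then (1 : R) else 0) * F (x j') := by
          rw [Finset.sum_eq_single j₀]
          · simp
          · intro b _ hb
            rw [if_neg fun h => hb (hinj h), zero_mul]
          · intro h
            exact absurd (Finset.mem_univ j₀) h
      _ = ∑ j' : Fin (n + m),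
            (∑ j : Fin (n + m),
              if x j ≤ x j₀ then IncidenceAlgebra.mu R (x j') (x j) else 0) * F (x j') := by
          refine Finset.sum_congr rfl fun j' _ => ?_
          rw [inner j']
      _ = ∑ j : Fin (n + m), if x j ≤ x j₀ then f (x j) else 0 := by
          simp only [Finset.sum_mul, ite_mul, zero_mul]
          rw [Finset.sum_comm]
          refine Finset.sum_congr rfl fun j _ => ?_
          by_cases h : x j ≤ x j₀
          · simp only [h, if_true, hf (x j)]
          · simp [h]
  -- Step 2: entry decomposition
  have hentry : ∀ (i₁ i₂ : Fin n) (t : Fin p → Fin n),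
      F (meetAll (z i₁ ⊓ x (Fin.castAdd m i₂)) (fun l => x (Fin.castAdd m (t l))))
      = ∑ j : Fin (n + m),
          (if x j ≤ x (Fin.castAdd m i₂) then (1 : R) else 0) *
          (if x j ≤ meetAll (z i₁) (fun l => x (Fin.castAdd m (t l))) then f (x j) else 0) := by
    intro i₁ i₂ t
    set w := meetAll (z i₁ ⊓ x (Fin.castAdd m i₂)) (fun l => x (Fin.castAdd m (t l))) with hw
    have hwle : w ≤ x (Fin.castAdd m i₂) := le_trans (meetAll_le _ _) inf_le_right
    obtain ⟨j₀, hj₀⟩ := hfc (Fin.castAdd m i₂) w hwle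
    have hsplit : ∀ c : L,
        c ≤ w ↔ (c ≤ meetAll (z i₁) (fun l => x (Fin.castAdd m (t l)))
          ∧ c ≤ x (Fin.castAdd m i₂)) := by
      intro c
      rw [hw, le_meetAll, le_meetAll, le_inf_iff]
      tauto
    rw [← hj₀, hFw j₀, hj₀]
    refine Finset.sum_congr rfl fun j _ => ?_
    by_cases h1 : x j ≤ meetAll (z i₁) (fun l => x (Fin.castAdd m (t l))) <;>
      by_cases h2 : x j ≤ x (Fin.castAdd m i₂) <;>
      simp [hsplit, h1, h2]
  -- Step 3 : matrices
  set Cmat : Matrix (Fin n) (Fin (n + m)) R :=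
    Matrix.of fun a j => if x j ≤ x (Fin.castAdd m a) then (1 : R) else 0 with hCmat
  set Nmat : (Fin p → Equiv.Perm (Fin n)) → Matrix (Fin (n + m)) (Fin n) R :=
    fun τ => Matrix.of fun j b =>
      if x j ≤ meetAll (z b) (fun l => x (Fin.castAdd m (τ l b))) then f (x j) else 0
    with hNmat
  rw [detF_eq]
  have hmat : ∀ τ : Fin p → Equiv.Perm (Fin n),
      (Matrix.of fun a b =>
        F (meetAll (z b ⊓ x (Fin.castAdd m a)) (fun l => x (Fin.castAdd m (τ l b)))))
      = Cmat * Nmat τ := by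
    intro τ
    ext a b
    rw [Matrix.mul_apply]
    exact hentry b a (fun l => τ l b)
  have hdetC : ∀ κ : Fin n → Fin (n + m),
      (Cmat.submatrix id κ).det
      = (Matrix.of fun i j : Fin n =>
          if x (κ i) ≤ x (Fin.castAdd m j) then (1 : R) else 0).det := by
    intro κ
    rw [← Matrix.det_transpose]
    congr 1
  have hdetN : ∀ (τ : Fin p → Equiv.Perm (Fin n)) (κ : Fin n → Fin (n + m)),
      ((Nmat τ).submatrix κ id).det
      = (∏ i : Fin n, f (x (κ i))) *
        (Matrix.of fun i b : Fin n =>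
          if x (κ i) ≤ meetAll (z b) (fun l => x (Fin.castAdd m (τ l b))) then (1 : R)
          else 0).det := by
    intro τ κ
    rw [← Matrix.det_mul_column]
    congr 1
    ext i b
    simp [hNmat, mul_ite]
  calc (∑ τ : Fin p → Equiv.Perm (Fin n), 𝓕 τ *
        (Matrix.of fun a b =>
          F (meetAll (z b ⊓ x (Fin.castAdd m a))
            (fun l => x (Fin.castAdd m (τ l b))))).det)
      = ∑ τ : Fin p → Equiv.Perm (Fin n),
          ∑ κ ∈ Finset.univ.filter
            (fun κ : Fin n → Fin (n + m) => ∀ i j : Fin n, i < j → κ i < κ j),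
          (∏ i : Fin n, f (x (κ i))) *
            (𝓕 τ * (Matrix.of fun i b : Fin n =>
              if x (κ i) ≤ meetAll (z b) (fun l => x (Fin.castAdd m (τ l b))) then (1 : R)
              else 0).det) *
            (Matrix.of fun i j : Fin n =>
              if x (κ i) ≤ x (Fin.castAdd m j) then (1 : R) else 0).det := by
        refine Finset.sum_congr rfl fun τ _ => ?_
        rw [hmat τ, cauchyBinet, Finset.mul_sum]
        refine Finset.sum_congr rfl fun κ _ => ?_
        rw [hdetC, hdetN]
        ring
    _ = ∑ κ ∈ Finset.univ.filter
          (fun κ : Fin n → Fin (n + m) => ∀ i j : Fin n, i < j → κ i < κ j),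
        (∏ i : Fin n, f (x (κ i))) *
          DetF 𝓕 (fun i₁ i₂ t =>
            if x (κ i₂) ≤ meetAll (z i₁) (fun l => x (Fin.castAdd m (t l))) then (1 : R)
            else 0) *
          (Matrix.of fun i j : Fin n =>
            if x (κ i) ≤ x (Fin.castAdd m j) then (1 : R) else 0).det := by
        rw [Finset.sum_comm]
        refine Finset.sum_congr rfl fun κ _ => ?_
        conv_rhs => rw [detF_eq, Finset.mul_sum, Finset.sum_mul]
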